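/- Let u : ℝ → ℝ be a C² function satisfying u''(s) + 2·sech²(s)·u(s) = u(s) for all s ∈ ℝ. Then there exist unique real numbers a and b such that u(s) = a·sech(s) + b·(sinh(s) + s·sech(s)) for all s. -/

import Mathlib

open Real Set

private lemma aux_f (s : ℝ) :
    HasDerivAt (fun t => (Real.cosh t)⁻¹) (-Real.sinh s / Real.cosh s ^ 2) s :=
  (Real.hasDerivAt_cosh s).inv (Real.cosh_pos s).ne'

private lemma aux_f' (s : ℝ) :
    HasDerivAt (fun t => -Real.sinh t / Real.cosh t ^ 2)
      ((1 - 2 * ((Real.cosh s)⁻¹) ^ 2) * (Real.cosh s)⁻¹) s := by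
  have h1 : HasDerivAt (fun t => -Real.sinh t) (-Real.cosh s) s := (Real.hasDerivAt_sinh s).neg
  have h2 : HasDerivAt (fun t => Real.cosh t ^ 2) ((2 : ℕ) * Real.cosh s ^ 1 * Real.sinh s) s :=
    (Real.hasDerivAt_cosh s).pow 2
  have h3 := h1.div h2 (by positivity)
  refine h3.congr_deriv ?_
  have hc := (Real.cosh_pos s).ne'
  have hsq := Real.cosh_sq s
  field_simp
  push_cast
  nlinarith [hsq]

private lemma aux_g (s : ℝ) :
    HasDerivAt (fun t => Real.sinh t + t * (Real.cosh t)⁻¹)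
      (Real.cosh s + (1 * (Real.cosh s)⁻¹ + s * (-Real.sinh s / Real.cosh s ^ 2))) s :=
  (Real.hasDerivAt_sinh s).add ((hasDerivAt_id s).mul (aux_f s))

private lemma aux_g' (s : ℝ) :
    HasDerivAt (fun t => Real.cosh t + (1 * (Real.cosh t)⁻¹ + t * (-Real.sinh t / Real.cosh t ^ 2)))
      ((1 - 2 * ((Real.cosh s)⁻¹) ^ 2) * (Real.sinh s + s * (Real.cosh s)⁻¹)) s := by
  have h1 : HasDerivAt (fun t => 1 * (Real.cosh t)⁻¹) (1 * (-Real.sinh s / Real.cosh s ^ 2)) s :=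
    (aux_f s).const_mul 1
  have h2 : HasDerivAt (fun t => t * (-Real.sinh t / Real.cosh t ^ 2))
      (1 * (-Real.sinh s / Real.cosh s ^ 2) +
        s * ((1 - 2 * ((Real.cosh s)⁻¹) ^ 2) * (Real.cosh s)⁻¹)) s :=
    (hasDerivAt_id s).mul (aux_f' s)
  have h3 := (Real.hasDerivAt_cosh s).add (h1.add h2)
  refine h3.congr_deriv ?_
  have hc := (Real.cosh_pos s).ne'
  field_simp
  ring

/-- The general solution of the mode one Jacobi equation
`u'' + 2 sech²(s) u = u` on `ℝ` is a unique combination of the profiles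
`sech(s)` and `sinh(s) + s sech(s)`. -/
theorem mode_one_jacobi_general_solution
    (u : ℝ → ℝ) (hreg : ContDiff ℝ 2 u)
    (heq : ∀ s : ℝ,
      deriv (deriv u) s + 2 * ((Real.cosh s)⁻¹) ^ 2 * u s = u s) :
    ∃! p : ℝ × ℝ, ∀ s : ℝ,
      u s = p.1 * (Real.cosh s)⁻¹
        + p.2 * (Real.sinh s + s * (Real.cosh s)⁻¹) := by
  set a := u 0 with ha
  set b := deriv u 0 / 2 with hb
  -- the candidate combination and its derivative
  set f : ℝ → ℝ := fun t => (Real.cosh t)⁻¹ with hf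
  set g : ℝ → ℝ := fun t => Real.sinh t + t * (Real.cosh t)⁻¹ with hg
  set f' : ℝ → ℝ := fun t => -Real.sinh t / Real.cosh t ^ 2 with hf'
  set g' : ℝ → ℝ := fun t =>
    Real.cosh t + (1 * (Real.cosh t)⁻¹ + t * (-Real.sinh t / Real.cosh t ^ 2)) with hg'
  -- the first order system
  set v : ℝ → ℝ × ℝ → ℝ × ℝ :=
    fun t p => (p.2, (1 - 2 * ((Real.cosh t)⁻¹) ^ 2) * p.1) with hv
  have hlip : ∀ t, LipschitzWith 1 (v t) := by
    intro t
    apply LipschitzWith.of_dist_le_mul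
    intro p q
    have hc : |1 - 2 * ((Real.cosh t)⁻¹) ^ 2| ≤ 1 := by
      have h1 : (1 : ℝ) ≤ Real.cosh t := Real.one_le_cosh t
      have h2 : ((Real.cosh t)⁻¹) ^ 2 ≤ 1 := by
        rw [← one_pow 2]
        apply pow_le_pow_left₀ (by positivity)
        rw [inv_le_one_iff₀]; right; exact h1
      have h3 : 0 < ((Real.cosh t)⁻¹) ^ 2 := by positivity
      rw [abs_le]; constructor <;> nlinarith
    rw [Prod.dist_eq, Prod.dist_eq]
    simp only [hv, NNReal.coe_one, one_mul]
    apply max_le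
    · exact le_max_right _ _
    · calc dist ((1 - 2 * ((Real.cosh t)⁻¹) ^ 2) * p.1) ((1 - 2 * ((Real.cosh t)⁻¹) ^ 2) * q.1)
          = |1 - 2 * ((Real.cosh t)⁻¹) ^ 2| * dist p.1 q.1 := by
            rw [Real.dist_eq, Real.dist_eq, ← abs_mul]; ring_nf
        _ ≤ 1 * dist p.1 q.1 := by
            apply mul_le_mul_of_nonneg_right hc dist_nonneg
        _ ≤ max (dist p.1 q.1) (dist p.2 q.2) := by rw [one_mul]; exact le_max_left _ _
  -- F and G solve the system
  set F : ℝ → ℝ × ℝ := fun t => (u t, deriv u t) with hF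
  set G : ℝ → ℝ × ℝ := fun t => (a * f t + b * g t, a * f' t + b * g' t) with hG
  have hdu : Differentiable ℝ u := hreg.differentiable (by norm_num)
  have hdu2 : Differentiable ℝ (deriv u) := by
    have : ContDiff ℝ (1 + 1) u := by norm_num at hreg ⊢; exact hreg
    rw [contDiff_succ_iff_deriv] at this
    exact this.2.2.differentiable (by norm_num)
  have hFd : ∀ t, HasDerivAt F (v t (F t)) t := by
    intro t
    have h1 : HasDerivAt u (deriv u t) t := (hdu t).hasDerivAt
    have h2 : HasDerivAt (deriv u) ((1 - 2 * ((Real.cosh t)⁻¹) ^ 2) * u t) t := by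
      have := (hdu2 t).hasDerivAt
      have he := heq t
      refine this.congr_deriv ?_
      linarith
    exact HasDerivAt.prodMk h1 h2
  have hGd : ∀ t, HasDerivAt G (v t (G t)) t := by
    intro t
    have h1 : HasDerivAt (fun t => a * f t + b * g t) (a * f' t + b * g' t) t := by
      exact ((aux_f t).const_mul a).add ((aux_g t).const_mul b)
    have h2 : HasDerivAt (fun t => a * f' t + b * g' t)
        ((1 - 2 * ((Real.cosh t)⁻¹) ^ 2) * (a * f t + b * g t)) t := by
      have := ((aux_f' t).const_mul a).add ((aux_g' t).const_mul b)
      refine this.congr_deriv ?_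
      simp only [hf, hg]
      ring
    exact HasDerivAt.prodMk h1 h2
  have h0 : F 0 = G 0 := by
    simp only [hF, hG, hf, hg, hf', hg']
    norm_num [Real.cosh_zero, Real.sinh_zero]
    exact ⟨ha.symm, by rw [hb]; ring⟩
  have hFG : ∀ t, F t = G t := by
    intro t
    have habs : (0 : ℝ) ≤ |t| := abs_nonneg t
    have hb' : (0 : ℝ) ∈ Ioo (-(|t| + 1)) (|t| + 1) := ⟨by linarith, by linarith⟩
    have := ODE_solution_unique_of_mem_Icc (s := fun _ => (univ : Set (ℝ × ℝ)))
      (fun t _ => (hlip t).lipschitzOnWith) hb'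
      (fun x _ => (hFd x).continuousAt.continuousWithinAt)
      (fun x _ => hFd x) (fun _ _ => mem_univ _)
      (fun x _ => (hGd x).continuousAt.continuousWithinAt)
      (fun x _ => hGd x) (fun _ _ => mem_univ _) h0
    apply this
    constructor
    · have := neg_abs_le t; linarith
    · have := le_abs_self t; linarith
  have hmain : ∀ s : ℝ, u s = a * (Real.cosh s)⁻¹ + b * (Real.sinh s + s * (Real.cosh s)⁻¹) := by
    intro s
    have := congrArg Prod.fst (hFG s)
    simpa [hF, hG, hf, hg] using this
  refine ⟨(a, b), hmain, ?_⟩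
  rintro ⟨c, d⟩ hq
  have h1 : c = a := by
    have := hq 0
    have h0' := hmain 0
    simp [Real.cosh_zero, Real.sinh_zero] at this
    simpa [ha] using this.symm
  have hd : (0 : ℝ) < Real.sinh 1 + 1 * (Real.cosh 1)⁻¹ := by
    have h1 : (0 : ℝ) < Real.sinh 1 := by
      rw [← Real.sinh_zero]
      exact Real.sinh_lt_sinh.mpr one_pos
    have h2 : (0 : ℝ) < (Real.cosh 1)⁻¹ := by positivity
    linarith
  have h2 : d = b := by
    have hA := hq 1
    have hB := hmain 1
    rw [hA, h1] at hB
    have : d * (Real.sinh 1 + 1 * (Real.cosh 1)⁻¹) = b * (Real.sinh 1 + 1 * (Real.cosh 1)⁻¹) := by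
      linarith
    exact mul_right_cancel₀ hd.ne' this
  simp [h1, h2]
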